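/- Let W be the set of pairs in M top-reducible by no element of G, assume W is nonempty and let ν < +∞ be the minimal valuation val(v) over (u,v) ∈ W. Then the set L = {LM(u) : (u,v) ∈ W, val(LM(v)) = ν} admits a minimal element for the term order. -/

import Mathlib

open MvPowerSeries

namespace TateStmt

variable {n : ℕ} {O : Type*} [CommRing O]

/-- The Tate condition: the (π-adic) valuations of the coefficients tend to infinity. -/
def IsTate (π : O) (f : MvPowerSeries (Fin n) O) : Prop :=
  ∀ N : ℕ, {i : Fin n →₀ ℕ | ¬ π ^ N ∣ MvPowerSeries.coeff i f}.Finite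

/-- The integral Tate algebra `K{X}°`, as a subring of the ring of formal power series
over the valuation ring `O = K°`. -/
def TateAlgebra (n : ℕ) (O : Type*) [CommRing O] (π : O) :
    Subring (MvPowerSeries (Fin n) O) where
  carrier := {f | IsTate π f}
  zero_mem' := by
    intro N
    apply Set.Finite.subset (Set.finite_empty)
    intro i hi
    exact hi (Dvd.intro 0 (by simp))
  one_mem' := by
    intro N
    apply Set.Finite.subset (Set.finite_singleton (0 : Fin n →₀ ℕ))
    intro i hi
    by_contra h
    rw [Set.mem_singleton_iff] at h
    apply hi
    rw [MvPowerSeries.coeff_one, if_neg h]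
    exact Dvd.intro 0 (by simp)
  add_mem' := by
    intro f g hf hg N
    apply Set.Finite.subset ((hf N).union (hg N))
    intro i hi
    by_contra h
    simp only [Set.mem_union, Set.mem_setOf_eq, not_or, not_not] at h
    exact hi (by rw [map_add]; exact dvd_add h.1 h.2)
  neg_mem' := by
    intro f hf N
    apply Set.Finite.subset (hf N)
    intro i hi
    by_contra h
    simp only [Set.mem_setOf_eq, not_not] at h
    exact hi (by rw [map_neg]; exact (dvd_neg).mpr h)
  mul_mem' := by
    intro f g hf hg N
    apply Set.Finite.subset (Set.Finite.add (hf N) (hg N))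
    intro i hi
    by_contra h
    apply hi
    rw [MvPowerSeries.coeff_mul]
    apply Finset.dvd_sum
    intro p hp
    rw [Finset.HasAntidiagonal.mem_antidiagonal] at hp
    by_cases h1 : π ^ N ∣ MvPowerSeries.coeff p.1 f
    · exact Dvd.dvd.mul_right h1 _
    · by_cases h2 : π ^ N ∣ MvPowerSeries.coeff p.2 g
      · exact Dvd.dvd.mul_left h2 _
      · exact absurd (hp ▸ Set.add_mem_add h1 h2) h

/-- Tate monomials `π^a X^i`, identified with pairs `(a, i) ∈ ℕ × ℕ^n`. -/
abbrev TMon (n : ℕ) := ℕ × (Fin n →₀ ℕ)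

noncomputable def monMul (a b : TMon n) : TMon n := (a.1 + b.1, a.2 + b.2)
def monDvd (a b : TMon n) : Prop := a.1 ≤ b.1 ∧ a.2 ≤ b.2
noncomputable def monDiv (a b : TMon n) : TMon n := (a.1 - b.1, a.2 - b.2)
noncomputable def monLcm (a b : TMon n) : TMon n := (max a.1 b.1, a.2 ⊔ b.2)

/-- The valuation-first term order: compare valuations first (a *smaller* valuation gives a
*larger* term), then exponents via the monomial order `mo`. -/
def termLT (mo : MonomialOrder (Fin n)) (a b : TMon n) : Prop :=
  b.1 < a.1 ∨ (a.1 = b.1 ∧ mo.toSyn a.2 < mo.toSyn b.2)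

def termLE (mo : MonomialOrder (Fin n)) (a b : TMon n) : Prop :=
  a = b ∨ termLT mo a b

/-- Order on `Option (TMon n)`, where `none` (the "monomial" of `0`) is smallest. -/
def optLT (mo : MonomialOrder (Fin n)) : Option (TMon n) → Option (TMon n) → Prop
  | none, none => False
  | none, some _ => True
  | some _, none => False
  | some a, some b => termLT mo a b

def optLE (mo : MonomialOrder (Fin n)) (a b : Option (TMon n)) : Prop :=
  a = b ∨ optLT mo a b

noncomputable def optMul (t : TMon n) : Option (TMon n) → Option (TMon n)
  | none => none
  | some a => some (monMul t a)

/-- `(a, i)` is (the monomial of) a term of `f`: the coefficient of `X^i` has valuation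
exactly `a`. -/
def IsTerm (π : O) (f : MvPowerSeries (Fin n) O) (m : TMon n) : Prop :=
  π ^ m.1 ∣ MvPowerSeries.coeff m.2 f ∧ ¬ π ^ (m.1 + 1) ∣ MvPowerSeries.coeff m.2 f

/-- `m` is the leading monomial of `f`. -/
def IsLM (π : O) (mo : MonomialOrder (Fin n)) (f : MvPowerSeries (Fin n) O) (m : TMon n) :
    Prop :=
  IsTerm π f m ∧ ∀ m', IsTerm π f m' → termLE mo m' m

/-- `s` is the leading monomial of `f`, with the convention `LM 0 = none`. -/
def IsLMopt (π : O) (mo : MonomialOrder (Fin n)) (f : MvPowerSeries (Fin n) O) :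
    Option (TMon n) → Prop
  | none => f = 0
  | some m => IsLM π mo f m

/-- All coefficients of `f` are divisible by `π^N`, i.e. `val f ≥ N`. -/
def DvdAll (π : O) (N : ℕ) (f : MvPowerSeries (Fin n) O) : Prop :=
  ∀ i, π ^ N ∣ MvPowerSeries.coeff i f

/-- The Gauss valuation of `f` is exactly `N`. -/
def ValEq (π : O) (f : MvPowerSeries (Fin n) O) (N : ℕ) : Prop :=
  DvdAll π N f ∧ ¬ DvdAll π (N + 1) f

/-- `G` is a Gröbner basis of the ideal `I` of the (integral) Tate algebra. -/
def IsGB (π : O) (mo : MonomialOrder (Fin n)) (G : Set (TateAlgebra n O π))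
    (I : Ideal (TateAlgebra n O π)) : Prop :=
  (∀ g ∈ G, g ∈ I) ∧
    ∀ f ∈ I, (f : MvPowerSeries (Fin n) O) ≠ 0 → ∀ mf,
      IsLM π mo (f : MvPowerSeries (Fin n) O) mf →
        ∃ g ∈ G, ∃ mg, IsLM π mo (g : MvPowerSeries (Fin n) O) mg ∧ monDvd mg mf

/-- The module `M = {(u,v) : u f - v ∈ I₀}`. -/
def SigMod {π : O} (I0 : Ideal (TateAlgebra n O π)) (f : TateAlgebra n O π) :
    Set (TateAlgebra n O π × TateAlgebra n O π) :=
  {p | p.1 * f - p.2 ∈ I0}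

/-- `p = (u₁,v₁)` is top-reducible by `q = (u₂,v₂)`. -/
def TopRed (π : O) (mo : MonomialOrder (Fin n))
    (p q : TateAlgebra n O π × TateAlgebra n O π) : Prop :=
  (q.2 = 0 ∧ ∃ mu mq, IsLM π mo (p.1 : MvPowerSeries (Fin n) O) mu ∧
      IsLM π mo (q.1 : MvPowerSeries (Fin n) O) mq ∧ monDvd mq mu)
  ∨ (p.2 ≠ 0 ∧ q.2 ≠ 0 ∧
      ∃ m1 m2, IsLM π mo (p.2 : MvPowerSeries (Fin n) O) m1 ∧
        IsLM π mo (q.2 : MvPowerSeries (Fin n) O) m2 ∧ monDvd m2 m1 ∧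
        ∃ s1 s2, IsLMopt π mo (p.1 : MvPowerSeries (Fin n) O) s1 ∧
          IsLMopt π mo (q.1 : MvPowerSeries (Fin n) O) s2 ∧
          optLE mo (optMul (monDiv m1 m2) s2) s1)

/-- `G` is a strong Gröbner basis of the module `M = SigMod I0 f`. -/
def IsSGB (π : O) (mo : MonomialOrder (Fin n)) (I0 : Ideal (TateAlgebra n O π))
    (f : TateAlgebra n O π) (G : Set (TateAlgebra n O π × TateAlgebra n O π)) : Prop :=
  G.Finite ∧ G ⊆ SigMod I0 f ∧
    ∀ p ∈ SigMod I0 f, p ≠ 0 → ∃ q ∈ G, TopRed π mo p q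

/-- `p` is covered by `q`. -/
def Covers (π : O) (mo : MonomialOrder (Fin n))
    (q p : TateAlgebra n O π × TateAlgebra n O π) : Prop :=
  ∃ mu mq, IsLM π mo (p.1 : MvPowerSeries (Fin n) O) mu ∧
    IsLM π mo (q.1 : MvPowerSeries (Fin n) O) mq ∧ monDvd mq mu ∧
    ∃ sv sp, IsLMopt π mo (q.2 : MvPowerSeries (Fin n) O) sv ∧
      IsLMopt π mo (p.2 : MvPowerSeries (Fin n) O) sp ∧
      optLT mo (optMul (monDiv mu mq) sv) sp

def CoveredBy (π : O) (mo : MonomialOrder (Fin n))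
    (p : TateAlgebra n O π × TateAlgebra n O π)
    (G : Set (TateAlgebra n O π × TateAlgebra n O π)) : Prop :=
  ∃ q ∈ G, Covers π mo q p

/-- The Tate series `π^a X^i`, as an element of the Tate algebra. -/
noncomputable def monTA (π : O) (m : TMon n) : TateAlgebra n O π :=
  ⟨MvPowerSeries.monomial m.2 (π ^ m.1), by
    intro N
    apply Set.Finite.subset (Set.finite_singleton m.2)
    intro i hi
    by_contra h
    rw [Set.mem_singleton_iff] at h
    apply hi
    rw [MvPowerSeries.coeff_monomial, if_neg h]
    exact Dvd.intro 0 (by simp)⟩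

noncomputable def smulPair (π : O) (m : TMon n) (p : TateAlgebra n O π × TateAlgebra n O π) :
    TateAlgebra n O π × TateAlgebra n O π :=
  (monTA π m * p.1, monTA π m * p.2)

/-- `r` is the J-pair of `(p, q)` (with `p` carrying the larger signature part). -/
def IsJPair (π : O) (mo : MonomialOrder (Fin n))
    (p q r : TateAlgebra n O π × TateAlgebra n O π) : Prop :=
  ∃ m1 m2, IsLM π mo (p.2 : MvPowerSeries (Fin n) O) m1 ∧
    IsLM π mo (q.2 : MvPowerSeries (Fin n) O) m2 ∧
    (∃ s1 s2, IsLMopt π mo (p.1 : MvPowerSeries (Fin n) O) s1 ∧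
      IsLMopt π mo (q.1 : MvPowerSeries (Fin n) O) s2 ∧
      optLT mo (optMul (monDiv (monLcm m1 m2) m2) s2)
        (optMul (monDiv (monLcm m1 m2) m1) s1)) ∧
    r = smulPair π (monDiv (monLcm m1 m2) m1) p

section Residue

variable {k : Type*} [Field k]

/-- `P = ρ(f)`, the reduction mod `π` of `π^{-val f} f`. -/
def IsRho (π : O) (φ : O →+* k) (f : MvPowerSeries (Fin n) O)
    (P : MvPolynomial (Fin n) k) : Prop :=
  ∃ (N : ℕ) (g : MvPowerSeries (Fin n) O), f = (π ^ N) • g ∧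
    (∃ i, ¬ π ∣ MvPowerSeries.coeff i g) ∧
    ∀ i, MvPolynomial.coeff i P = φ (MvPowerSeries.coeff i g)

def rhoSet (π : O) (φ : O →+* k) (S : Set (TateAlgebra n O π)) :
    Set (MvPolynomial (Fin n) k) :=
  {P | ∃ f ∈ S, IsRho π φ (f : MvPowerSeries (Fin n) O) P}

/-- `Ī_N`: the image in `k[X]` of `π^{-N} (I ∩ π^N K{X}°)`. -/
def BarIdeal (π : O) (φ : O →+* k) (I : Ideal (TateAlgebra n O π)) (N : ℕ) :
    Set (MvPolynomial (Fin n) k) :=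
  {P | ∃ f ∈ I, ∃ g : MvPowerSeries (Fin n) O, (f : MvPowerSeries (Fin n) O) = (π ^ N) • g ∧
    ∀ i, MvPolynomial.coeff i P = φ (MvPowerSeries.coeff i g)}

/-- `d` is the leading exponent of the polynomial `P` for the monomial order `mo`. -/
def IsPolyLM (mo : MonomialOrder (Fin n)) (P : MvPolynomial (Fin n) k)
    (d : Fin n →₀ ℕ) : Prop :=
  MvPolynomial.coeff d P ≠ 0 ∧ ∀ e, MvPolynomial.coeff e P ≠ 0 → mo.toSyn e ≤ mo.toSyn d

/-- `G` is a Gröbner basis of the set (ideal) `J` of polynomials over the residue field. -/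
def IsPolyGB (mo : MonomialOrder (Fin n)) (G : Set (MvPolynomial (Fin n) k))
    (J : Set (MvPolynomial (Fin n) k)) : Prop :=
  G ⊆ J ∧ ∀ P ∈ J, P ≠ 0 → ∀ d, IsPolyLM mo P d →
    ∃ Q ∈ G, ∃ e, IsPolyLM mo Q e ∧ e ≤ d

end Residue

end TateStmt


open TateStmt MvPowerSeries

variable {n : ℕ} {O : Type*} [CommRing O] [IsDomain O] [IsDiscreteValuationRing O]

/-- The set `W` of nonzero pairs of `M = {(u,v) : u f - v ∈ I₀}` that are top-reducible by
no element of `G`. -/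
def WSet (π : O) (mo : MonomialOrder (Fin n)) (I0 : Ideal (TateAlgebra n O π))
    (f : TateAlgebra n O π) (G : Set (TateAlgebra n O π × TateAlgebra n O π)) :
    Set (TateAlgebra n O π × TateAlgebra n O π) :=
  {p | p ∈ SigMod I0 f ∧ p ≠ 0 ∧ ∀ q ∈ G, ¬ TopRed π mo p q}

section AuxLemmas

variable (π : O) (mo : MonomialOrder (Fin n))

/-- In a DVR, every nonzero element has an exact `π`-adic valuation. -/
lemma aux_exact_val (hπ : Irreducible π) {c : O} (hc : c ≠ 0) :
    ∃ a : ℕ, π ^ a ∣ c ∧ ¬ π ^ (a + 1) ∣ c := by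
  obtain ⟨k, u, rfl⟩ := IsDiscreteValuationRing.eq_unit_mul_pow_irreducible hc hπ
  refine ⟨k, dvd_mul_left _ _, fun h => hπ.not_isUnit ?_⟩
  rw [pow_succ, mul_comm ((u : O)) (π ^ k)] at h
  have hπk : (π : O) ^ k ≠ 0 := pow_ne_zero _ hπ.ne_zero
  have : (π : O) ∣ (u : O) := (mul_dvd_mul_iff_left hπk).mp h
  exact isUnit_of_dvd_unit this u.isUnit

/-- A nonzero coefficient yields a term of `f` at that index. -/
lemma aux_term (hπ : Irreducible π) {f : MvPowerSeries (Fin n) O} {i : Fin n →₀ ℕ}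
    (hc : MvPowerSeries.coeff i f ≠ 0) : ∃ a : ℕ, IsTerm π f (a, i) := by
  obtain ⟨a, h1, h2⟩ := aux_exact_val π hπ hc
  exact ⟨a, h1, h2⟩

/-- All coefficients of `f` are divisible by `π ^ (LM f).1`. -/
lemma aux_dvdAll_of_isLM (hπ : Irreducible π) {f : MvPowerSeries (Fin n) O} {m : TMon n}
    (h : IsLM π mo f m) : DvdAll π m.1 f := by
  intro i
  by_cases hc : MvPowerSeries.coeff i f = 0
  · rw [hc]; exact dvd_zero _
  · obtain ⟨a, ha⟩ := aux_term π hπ hc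
    have hle : m.1 ≤ a := by
      rcases h.2 _ ha with heq | hlt | ⟨heq, _⟩
      · rw [← heq]
      · exact le_of_lt hlt
      · exact le_of_eq heq.symm
    exact dvd_trans (pow_dvd_pow π hle) ha.1

/-- A nonzero Tate series has a well-defined valuation. -/
lemma aux_valEq_of_ne_zero (hπ : Irreducible π) {f : MvPowerSeries (Fin n) O} (hf : f ≠ 0) :
    ∃ N : ℕ, ValEq π f N := by
  classical
  have hex : ∃ N : ℕ, ¬ DvdAll π N f := by
    have : ∃ i, MvPowerSeries.coeff i f ≠ 0 := by
      by_contra h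
      push_neg at h
      exact hf (MvPowerSeries.ext fun i => by rw [h i, map_zero])
    obtain ⟨i, hi⟩ := this
    obtain ⟨a, _, h2⟩ := aux_exact_val π hπ hi
    exact ⟨a + 1, fun h => h2 (h i)⟩
  have h0 : DvdAll π 0 f := fun i => by rw [pow_zero]; exact one_dvd _
  have hne : Nat.find hex ≠ 0 := fun h => (Nat.find_spec hex) (h ▸ h0)
  refine ⟨Nat.find hex - 1, ?_, ?_⟩
  · have := Nat.find_min hex (m := Nat.find hex - 1) (Nat.sub_lt (Nat.pos_of_ne_zero hne) one_pos)
    exact not_not.mp this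
  · rw [Nat.sub_add_cancel (Nat.one_le_iff_ne_zero.mpr hne)]
    exact Nat.find_spec hex

/-- A Tate series of exact valuation `N` has a leading monomial of valuation `N`. -/
lemma aux_lm_of_valEq {f : MvPowerSeries (Fin n) O} (hT : IsTate π f) {N : ℕ}
    (hV : ValEq π f N) : ∃ m : TMon n, IsLM π mo f m ∧ m.1 = N := by
  have hfin : {i : Fin n →₀ ℕ | ¬ π ^ (N + 1) ∣ MvPowerSeries.coeff i f}.Finite := hT (N + 1)
  have hne : {i : Fin n →₀ ℕ | ¬ π ^ (N + 1) ∣ MvPowerSeries.coeff i f}.Nonempty := by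
    by_contra h
    rw [Set.not_nonempty_iff_eq_empty] at h
    refine hV.2 fun i => ?_
    by_contra hd
    have : i ∈ {i : Fin n →₀ ℕ | ¬ π ^ (N + 1) ∣ MvPowerSeries.coeff i f} := hd
    rw [h] at this
    exact this
  obtain ⟨i0, hi0, hmax⟩ := Set.exists_max_image _ (fun i => mo.toSyn i) hfin hne
  refine ⟨(N, i0), ⟨⟨hV.1 i0, hi0⟩, ?_⟩, rfl⟩
  rintro ⟨a, i⟩ ⟨hd1, hd2⟩
  have haN : N ≤ a := by
    by_contra h
    push_neg at h
    exact hd2 (dvd_trans (pow_dvd_pow π (Nat.succ_le_of_lt h)) (hV.1 i))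
  rcases lt_or_eq_of_le haN with hlt | heq
  · exact Or.inr (Or.inl hlt)
  · have hiS : i ∈ {i : Fin n →₀ ℕ | ¬ π ^ (N + 1) ∣ MvPowerSeries.coeff i f} := by
      simpa [← heq] using hd2
    rcases lt_or_eq_of_le (hmax i hiS) with hlt | heq2
    · exact Or.inr (Or.inr ⟨heq.symm, hlt⟩)
    · exact Or.inl (Prod.ext heq.symm (mo.toSyn.injective heq2))

end AuxLemmas

/-- if `W` is nonempty and `ν < +∞` is the minimal valuation `val v` over
`(u,v) ∈ W`, then `L = {LM(u) : (u,v) ∈ W, val(LM(v)) = ν}` admits a minimal element for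
the term order. -/
theorem statement_10 (π : O) (hπ : Irreducible π) (mo : MonomialOrder (Fin n))
    (I0 : Ideal (TateAlgebra n O π)) (f : TateAlgebra n O π)
    (G : Set (TateAlgebra n O π × TateAlgebra n O π))
    (hfin : G.Finite) (hGM : G ⊆ SigMod I0 f)
    (h1f : ((1 : TateAlgebra n O π), f) ∈ G)
    (hG0 : IsGB π mo {g : TateAlgebra n O π | ((0 : TateAlgebra n O π), g) ∈ G} I0)
    (ν : ℕ)
    (hν₁ : ∃ p ∈ WSet π mo I0 f G, ValEq π (p.2 : MvPowerSeries (Fin n) O) ν)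
    (hν₂ : ∀ p ∈ WSet π mo I0 f G, ∀ ν',
      ValEq π (p.2 : MvPowerSeries (Fin n) O) ν' → ν ≤ ν') :
    ∃ m0 ∈ {s : TMon n | ∃ p ∈ WSet π mo I0 f G,
        (∃ mv, IsLM π mo (p.2 : MvPowerSeries (Fin n) O) mv ∧ mv.1 = ν) ∧
        IsLM π mo (p.1 : MvPowerSeries (Fin n) O) s},
      ∀ m ∈ {s : TMon n | ∃ p ∈ WSet π mo I0 f G,
        (∃ mv, IsLM π mo (p.2 : MvPowerSeries (Fin n) O) mv ∧ mv.1 = ν) ∧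
        IsLM π mo (p.1 : MvPowerSeries (Fin n) O) s},
      termLE mo m0 m := by
  classical
  -- The key reduction lemma: if `(u,v) ∈ M`, `v ≠ 0` with leading monomial `mv`, and
  -- `val (u f) > mv.1`, then `w = u f - v ∈ I₀` has leading monomial `mv`, hence some
  -- `(0,g) ∈ G` top-reduces `(u,v)`.
  have key : ∀ p ∈ SigMod I0 f, (p.2 : MvPowerSeries (Fin n) O) ≠ 0 →
      ∀ mv, IsLM π mo (p.2 : MvPowerSeries (Fin n) O) mv →
      DvdAll π (mv.1 + 1) ((p.1 * f : TateAlgebra n O π) : MvPowerSeries (Fin n) O) →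
      ∃ q ∈ G, TopRed π mo p q := by
    intro p hp hv2 mv hmv hdvd
    set w : TateAlgebra n O π := p.1 * f - p.2 with hw
    have hwI : w ∈ I0 := hp
    have hcoe : (w : MvPowerSeries (Fin n) O)
        = ((p.1 * f : TateAlgebra n O π) : MvPowerSeries (Fin n) O)
          - (p.2 : MvPowerSeries (Fin n) O) := rfl
    have hDv : DvdAll π mv.1 (p.2 : MvPowerSeries (Fin n) O) :=
      aux_dvdAll_of_isLM π mo hπ hmv
    have hwLM : IsLM π mo (w : MvPowerSeries (Fin n) O) mv := by
      constructor
      · constructor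
        · rw [hcoe, map_sub]
          exact dvd_sub ((dvd_trans (pow_dvd_pow π (Nat.le_succ _)) (hdvd mv.2))) (hmv.1.1)
        · rw [hcoe, map_sub]
          intro h
          have : π ^ (mv.1 + 1) ∣ MvPowerSeries.coeff mv.2 (p.2 : MvPowerSeries (Fin n) O) := by
            have := dvd_sub (hdvd mv.2) h
            simpa using this
          exact hmv.1.2 this
      · rintro ⟨a, i⟩ ⟨hd1, hd2⟩
        have hDw : DvdAll π mv.1 (w : MvPowerSeries (Fin n) O) := by
          intro j
          rw [hcoe, map_sub]
          exact dvd_sub (dvd_trans (pow_dvd_pow π (Nat.le_succ _)) (hdvd j)) (hDv j)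
        have haN : mv.1 ≤ a := by
          by_contra h
          push_neg at h
          exact hd2 (dvd_trans (pow_dvd_pow π (Nat.succ_le_of_lt h)) (hDw i))
        rcases lt_or_eq_of_le haN with hlt | heq
        · exact Or.inr (Or.inl hlt)
        · -- a term of `w` at level `mv.1` is a term of `v`
          have hvterm : IsTerm π (p.2 : MvPowerSeries (Fin n) O) (a, i) := by
            constructor
            · exact heq ▸ hDv i
            · intro h
              apply hd2
              rw [hcoe, map_sub]
              exact dvd_sub (heq ▸ hdvd i) h
          exact hmv.2 _ hvterm
    have hwne : (w : MvPowerSeries (Fin n) O) ≠ 0 := by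
      intro h
      apply hwLM.1.2
      rw [h, map_zero]
      exact dvd_zero _
    obtain ⟨g, hgG, mg, hgLM, hdvdm⟩ :=
      hG0.2 w hwI hwne mv hwLM
    refine ⟨(0, g), hgG, Or.inr ?_⟩
    have hgne : (g : TateAlgebra n O π) ≠ 0 := by
      intro h
      apply hgLM.1.2
      rw [h]
      show π ^ (mg.1 + 1) ∣ MvPowerSeries.coeff mg.2 (0 : MvPowerSeries (Fin n) O)
      rw [map_zero]
      exact dvd_zero _
    have hpv : p.2 ≠ 0 := fun h => hv2 (by rw [h]; rfl)
    refine ⟨hpv, hgne, mv, mg, hmv, hgLM, hdvdm, ?_⟩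
    by_cases hu : (p.1 : MvPowerSeries (Fin n) O) = 0
    · exact ⟨none, none, hu, rfl, Or.inl rfl⟩
    · obtain ⟨Nu, hNu⟩ := aux_valEq_of_ne_zero π hπ hu
      obtain ⟨su, hsu, -⟩ := aux_lm_of_valEq π mo (p.1).2 hNu
      exact ⟨some su, none, hsu, rfl, Or.inr trivial⟩
  -- L is nonempty
  obtain ⟨p, hpW, hval⟩ := hν₁
  have hv2 : (p.2 : MvPowerSeries (Fin n) O) ≠ 0 := by
    intro h
    exact hval.2 fun i => by rw [h, map_zero]; exact dvd_zero _
  obtain ⟨mv, hmv, hmv1⟩ := aux_lm_of_valEq π mo (p.2).2 hval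
  have hu : (p.1 : MvPowerSeries (Fin n) O) ≠ 0 := by
    intro h
    obtain ⟨q, hq, ht⟩ := key p hpW.1 hv2 mv hmv (by
      intro i
      have h0 : ((p.1 * f : TateAlgebra n O π) : MvPowerSeries (Fin n) O)
          = (p.1 : MvPowerSeries (Fin n) O) * (f : MvPowerSeries (Fin n) O) := rfl
      rw [h0, h, zero_mul, map_zero]
      exact dvd_zero _)
    exact hpW.2.2 q hq ht
  obtain ⟨Nu, hNu⟩ := aux_valEq_of_ne_zero π hπ hu
  obtain ⟨su, hsu, -⟩ := aux_lm_of_valEq π mo (p.1).2 hNu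
  have hmem : su ∈ {s : TMon n | ∃ p ∈ WSet π mo I0 f G,
      (∃ mv, IsLM π mo (p.2 : MvPowerSeries (Fin n) O) mv ∧ mv.1 = ν) ∧
      IsLM π mo (p.1 : MvPowerSeries (Fin n) O) s} :=
    ⟨p, hpW, ⟨mv, hmv, hmv1⟩, hsu⟩
  -- every element of L has first component at most ν
  have hbd : ∀ s ∈ {s : TMon n | ∃ p ∈ WSet π mo I0 f G,
      (∃ mv, IsLM π mo (p.2 : MvPowerSeries (Fin n) O) mv ∧ mv.1 = ν) ∧
      IsLM π mo (p.1 : MvPowerSeries (Fin n) O) s}, s.1 ≤ ν := by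
    rintro s ⟨q, hqW, ⟨mv', hmv', hmv'1⟩, hs⟩
    by_contra hgt
    push_neg at hgt
    have hv2' : (q.2 : MvPowerSeries (Fin n) O) ≠ 0 := by
      intro h
      apply hmv'.1.2
      rw [h, map_zero]
      exact dvd_zero _
    have hDu : DvdAll π s.1 (q.1 : MvPowerSeries (Fin n) O) :=
      aux_dvdAll_of_isLM π mo hπ hs
    have hDuf : DvdAll π (mv'.1 + 1) ((q.1 * f : TateAlgebra n O π) : MvPowerSeries (Fin n) O) := by
      intro i
      have h0 : ((q.1 * f : TateAlgebra n O π) : MvPowerSeries (Fin n) O)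
          = (q.1 : MvPowerSeries (Fin n) O) * (f : MvPowerSeries (Fin n) O) := rfl
      rw [h0, MvPowerSeries.coeff_mul]
      refine Finset.dvd_sum fun c _ => ?_
      have : π ^ (mv'.1 + 1) ∣ MvPowerSeries.coeff c.1 (q.1 : MvPowerSeries (Fin n) O) := by
        refine dvd_trans (pow_dvd_pow π ?_) (hDu c.1)
        rw [hmv'1]
        exact Nat.succ_le_of_lt hgt
      exact this.mul_right _
    obtain ⟨qg, hqg, ht⟩ := key q hqW.1 hv2' mv' hmv' hDuf
    exact hqW.2.2 qg hqg ht
  -- take the maximal valuation occurring in L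
  set A : Set ℕ := {a | ∃ s ∈ {s : TMon n | ∃ p ∈ WSet π mo I0 f G,
      (∃ mv, IsLM π mo (p.2 : MvPowerSeries (Fin n) O) mv ∧ mv.1 = ν) ∧
      IsLM π mo (p.1 : MvPowerSeries (Fin n) O) s}, s.1 = a} with hA
  have hAne : A.Nonempty := ⟨su.1, su, hmem, rfl⟩
  have hAbdd : BddAbove A := ⟨ν, by rintro a ⟨s, hsL, rfl⟩; exact hbd s hsL⟩
  obtain ⟨s0, hs0L, hs01⟩ := Nat.sSup_mem hAne hAbdd
  -- among those, minimize the exponent via well-foundedness of the monomial order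
  set T : Set mo.syn := {t | ∃ s ∈ {s : TMon n | ∃ p ∈ WSet π mo I0 f G,
      (∃ mv, IsLM π mo (p.2 : MvPowerSeries (Fin n) O) mv ∧ mv.1 = ν) ∧
      IsLM π mo (p.1 : MvPowerSeries (Fin n) O) s}, s.1 = sSup A ∧ mo.toSyn s.2 = t} with hT
  have hTne : T.Nonempty := ⟨mo.toSyn s0.2, s0, hs0L, hs01, rfl⟩
  obtain ⟨t0, ht0T, ht0min⟩ := (wellFounded_lt (α := mo.syn)).has_min T hTne
  obtain ⟨m0, hm0L, hm01, hm0t⟩ := ht0T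
  refine ⟨m0, hm0L, ?_⟩
  intro m hmL
  have hm1 : m.1 ≤ sSup A := le_csSup hAbdd ⟨m, hmL, rfl⟩
  rcases lt_or_eq_of_le hm1 with h | h
  · exact Or.inr (Or.inl (hm01 ▸ h))
  · have hmT : mo.toSyn m.2 ∈ T := ⟨m, hmL, h, rfl⟩
    have hle : t0 ≤ mo.toSyn m.2 := not_lt.mp (ht0min _ hmT)
    rcases lt_or_eq_of_le hle with hlt | heq
    · exact Or.inr (Or.inr ⟨hm01.trans h.symm, hm0t ▸ hlt⟩)
    · refine Or.inl (Prod.ext (hm01.trans h.symm) (mo.toSyn.injective ?_))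
      rw [hm0t, heq]
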